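/- For positive semidefinite operators ρ, σ on a finite-dimensional Hilbert space and any orthogonal projector Π, the trace norm identities ‖√(ΠρΠ) √σ‖₁ = ‖√ρ √(ΠσΠ)‖₁ = ‖√(ΠρΠ) √(ΠσΠ)‖₁ hold. -/

import Mathlib

open scoped ComplexOrder Kronecker
open Matrix Classical

noncomputable def msqrt {n : Type*} [Fintype n] [DecidableEq n] (A : Matrix n n ℂ) :
    Matrix n n ℂ :=
  if h : A.PosSemidef then
    h.1.eigenvectorUnitary.1 * diagonal ((↑) ∘ (√·) ∘ h.1.eigenvalues) *
      (star h.1.eigenvectorUnitary : Matrix n n ℂ) else 0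

noncomputable def traceNorm {n : Type*} [Fintype n] [DecidableEq n] (A : Matrix n n ℂ) : ℝ :=
  (msqrt (Aᴴ * A)).trace.re

noncomputable def fid {n : Type*} [Fintype n] [DecidableEq n] (ρ σ : Matrix n n ℂ) : ℝ :=
  traceNorm (msqrt ρ * msqrt σ) + Real.sqrt ((1 - ρ.trace.re) * (1 - σ.trace.re))

noncomputable def pdist {n : Type*} [Fintype n] [DecidableEq n] (ρ σ : Matrix n n ℂ) : ℝ :=
  Real.sqrt (1 - (fid ρ σ) ^ 2)

/-- Loewner order: `A ≤ B` iff `B - A` is positive semidefinite. -/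
def loewnerLE {n : Type*} [Fintype n] (A B : Matrix n n ℂ) : Prop := (B - A).PosSemidef

/-- Max-relative entropy `D_max(ρ‖σ) = min {λ : ρ ≤ 2^λ σ}`. -/
noncomputable def Dmax {n : Type*} [Fintype n] (ρ σ : Matrix n n ℂ) : ℝ :=
  sInf {l : ℝ | loewnerLE ρ (((2 : ℝ) ^ l) • σ)}

def Subnormalized {n : Type*} [Fintype n] (ρ : Matrix n n ℂ) : Prop :=
  ρ.PosSemidef ∧ 0 < ρ.trace.re ∧ ρ.trace.re ≤ 1

def IsDensity {n : Type*} [Fintype n] (ρ : Matrix n n ℂ) : Prop :=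
  ρ.PosSemidef ∧ ρ.trace = 1

section aux
open Polynomial

variable {n : Type*} [Fintype n] [DecidableEq n]

noncomputable def Matrix.PosSemidef.sqrt {A : Matrix n n ℂ} (h : A.PosSemidef) : Matrix n n ℂ :=
  h.1.eigenvectorUnitary.1 * diagonal ((↑) ∘ (√·) ∘ h.1.eigenvalues) *
    (star h.1.eigenvectorUnitary : Matrix n n ℂ)

lemma Matrix.PosSemidef.sqrt_eq_cfc {A : Matrix n n ℂ} (h : A.PosSemidef) :
    h.sqrt = cfc Real.sqrt A := by
  rw [h.1.cfc_eq, Matrix.IsHermitian.cfc, Unitary.conjStarAlgAut_apply]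
  rfl

open scoped MatrixOrder in
lemma Matrix.PosSemidef.posSemidef_sqrt {A : Matrix n n ℂ} (h : A.PosSemidef) :
    h.sqrt.PosSemidef := by
  rw [h.sqrt_eq_cfc]
  exact (cfc_nonneg (a := A) (fun x _ => Real.sqrt_nonneg x)).posSemidef

open scoped MatrixOrder in
lemma Matrix.PosSemidef.sqrt_mul_self {A : Matrix n n ℂ} (h : A.PosSemidef) :
    h.sqrt * h.sqrt = A := by
  have hA : (0 : Matrix n n ℂ) ≤ A := h.nonneg
  rw [h.sqrt_eq_cfc, ← cfc_mul Real.sqrt Real.sqrt A]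
  conv_rhs => rw [← cfc_id' ℝ A h.1]
  refine cfc_congr fun x hx => ?_
  exact Real.mul_self_sqrt (spectrum_nonneg_of_nonneg hA hx)

lemma msqrt_of_posSemidef {A : Matrix n n ℂ} (h : A.PosSemidef) : msqrt A = h.sqrt := dif_pos h

lemma mconj_pow (U D : Matrix n n ℂ) (hU' : star U * U = 1) (hU : U * star U = 1) (k : ℕ) :
    (U * D * star U) ^ k = U * D ^ k * star U := by
  induction k with
  | zero => simpa using hU.symm
  | succ k ih =>
    have h : star U * (U * (D * star U)) = D * star U := by rw [← mul_assoc, hU', one_mul]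
    rw [pow_succ, ih, pow_succ]
    simp only [mul_assoc, h]

lemma maeval_conj (U D : Matrix n n ℂ) (hU' : star U * U = 1) (hU : U * star U = 1)
    (p : ℝ[X]) : aeval (U * D * star U) p = U * aeval D p * star U := by
  induction p using Polynomial.induction_on' with
  | add p q hp hq => simp [map_add, hp, hq, mul_add, add_mul]
  | monomial k a =>
    rw [aeval_monomial, aeval_monomial, mconj_pow U D hU' hU k]
    have h2 : U * (algebraMap ℝ (Matrix n n ℂ) a * D ^ k) =
        algebraMap ℝ (Matrix n n ℂ) a * (U * D ^ k) := by
      rw [← mul_assoc, ← Algebra.commutes, mul_assoc]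
    rw [h2]
    simp only [mul_assoc]

lemma aeval_diagonal (d : n → ℂ) (p : ℝ[X]) :
    aeval (Matrix.diagonal d) p = Matrix.diagonal (fun i => aeval (d i) p) := by
  induction p using Polynomial.induction_on' with
  | add p q hp hq => simp [map_add, hp, hq, diagonal_add]
  | monomial k a =>
    simp only [aeval_monomial, Matrix.diagonal_pow]
    rw [Matrix.algebraMap_eq_diagonal]
    simp [Matrix.diagonal_mul_diagonal, Algebra.smul_def]

lemma aeval_eq_sqrt {A : Matrix n n ℂ} (hA : A.PosSemidef) (p : ℝ[X])
    (hp : ∀ i, p.eval (hA.1.eigenvalues i) = Real.sqrt (hA.1.eigenvalues i)) :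
    aeval A p = hA.sqrt := by
  have hU' : star (hA.1.eigenvectorUnitary : Matrix n n ℂ) * (hA.1.eigenvectorUnitary : Matrix n n ℂ) = 1 :=
    Matrix.mem_unitaryGroup_iff'.mp (hA.1.eigenvectorUnitary).2
  have hU : (hA.1.eigenvectorUnitary : Matrix n n ℂ) * star (hA.1.eigenvectorUnitary : Matrix n n ℂ) = 1 :=
    Matrix.mem_unitaryGroup_iff.mp (hA.1.eigenvectorUnitary).2
  conv_lhs => rw [hA.1.spectral_theorem, Unitary.conjStarAlgAut_apply]
  rw [maeval_conj _ _ hU' hU, aeval_diagonal, Matrix.PosSemidef.sqrt]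
  refine congrArg₂ _ (congrArg₂ _ rfl (congrArg Matrix.diagonal (funext fun i => ?_))) rfl
  simp only [Function.comp_apply]
  rw [show (RCLike.ofReal (hA.1.eigenvalues i) : ℂ) = algebraMap ℝ ℂ (hA.1.eigenvalues i) from rfl,
    aeval_algebraMap_apply_eq_algebraMap_eval, hp i]
  rfl

lemma trace_pow_mul_comm (Y Z : Matrix n n ℂ) (k : ℕ) :
    ((Y * Z) ^ k).trace = ((Z * Y) ^ k).trace := by
  cases k with
  | zero => rfl
  | succ k =>
    have hs : SemiconjBy Y (Z * Y) (Y * Z) := by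
      unfold SemiconjBy; rw [mul_assoc]
    have h : (Y * Z) ^ (k + 1) = Y * ((Z * Y) ^ k * Z) := by
      rw [pow_succ, ← mul_assoc ((Y * Z) ^ k) Y Z, ← (hs.pow_right k).eq, mul_assoc]
    rw [h, Matrix.trace_mul_comm, pow_succ, mul_assoc]

lemma trace_aeval_eq (Y Z : Matrix n n ℂ) (p : ℝ[X]) :
    (aeval (Y * Z) p).trace = (aeval (Z * Y) p).trace := by
  rw [aeval_eq_sum_range, aeval_eq_sum_range, Matrix.trace_sum, Matrix.trace_sum]
  refine Finset.sum_congr rfl fun i _ => ?_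
  rw [Matrix.trace_smul, Matrix.trace_smul, trace_pow_mul_comm]

lemma traceNorm_conjTranspose (X : Matrix n n ℂ) : traceNorm Xᴴ = traceNorm X := by
  have hM := Matrix.posSemidef_conjTranspose_mul_self X
  have hN := Matrix.posSemidef_self_mul_conjTranspose X
  classical
  set s : Finset ℝ := Finset.image hM.1.eigenvalues Finset.univ ∪
    Finset.image hN.1.eigenvalues Finset.univ with hs
  set p := Lagrange.interpolate s id Real.sqrt with hpdef
  have hinj : Set.InjOn id (s : Set ℝ) := Function.injective_id.injOn
  have hpM : ∀ i, p.eval (hM.1.eigenvalues i) = Real.sqrt (hM.1.eigenvalues i) := fun i =>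
    Lagrange.eval_interpolate_at_node Real.sqrt hinj
      (Finset.mem_union_left _ (Finset.mem_image_of_mem _ (Finset.mem_univ i)))
  have hpN : ∀ i, p.eval (hN.1.eigenvalues i) = Real.sqrt (hN.1.eigenvalues i) := fun i =>
    Lagrange.eval_interpolate_at_node Real.sqrt hinj
      (Finset.mem_union_right _ (Finset.mem_image_of_mem _ (Finset.mem_univ i)))
  rw [traceNorm, traceNorm, conjTranspose_conjTranspose,
    msqrt_of_posSemidef hN, msqrt_of_posSemidef hM,
    ← aeval_eq_sqrt hN p hpN, ← aeval_eq_sqrt hM p hpM, trace_aeval_eq]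

lemma sqrt_mul_proj {C P : Matrix n n ℂ} (hC : C.PosSemidef) (hP : Pᴴ = P)
    (hCP : C * P = C) : hC.sqrt * P = hC.sqrt ∧ P * hC.sqrt = hC.sqrt := by
  have hsq : hC.sqrt * hC.sqrt = C := hC.sqrt_mul_self
  have hH : hC.sqrtᴴ = hC.sqrt := hC.posSemidef_sqrt.1
  have hzero : hC.sqrt * (1 - P) = 0 := by
    rw [← Matrix.conjTranspose_mul_self_eq_zero]
    have : (hC.sqrt * (1 - P))ᴴ * (hC.sqrt * (1 - P)) = (1 - P)ᴴ * C * (1 - P) := by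
      rw [Matrix.conjTranspose_mul, hH, ← mul_assoc, mul_assoc (1 - P)ᴴ, hsq]
    rw [this]
    have h1 : C * (1 - P) = 0 := by rw [mul_sub, mul_one, hCP, sub_self]
    rw [mul_assoc, h1, mul_zero]
  have h1 : hC.sqrt * P = hC.sqrt := by
    have h := hzero
    rw [mul_sub, mul_one, sub_eq_zero] at h
    exact h.symm
  refine ⟨h1, ?_⟩
  calc P * hC.sqrt = (hC.sqrt * P)ᴴ := by rw [Matrix.conjTranspose_mul, hH, hP]
  _ = hC.sqrt := by rw [h1, hH]

end aux

theorem stmt5 {n : Type*} [Fintype n] [DecidableEq n] (ρ σ P : Matrix n n ℂ)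
    (hρ : ρ.PosSemidef) (hσ : σ.PosSemidef) (hP : Pᴴ = P) (hP2 : P * P = P) :
    traceNorm (msqrt (P * ρ * P) * msqrt σ) = traceNorm (msqrt ρ * msqrt (P * σ * P)) ∧
    traceNorm (msqrt (P * ρ * P) * msqrt σ) =
      traceNorm (msqrt (P * ρ * P) * msqrt (P * σ * P)) := by
  have hρ' : (P * ρ * P).PosSemidef := by
    have h := hρ.mul_mul_conjTranspose_same P
    rwa [hP] at h
  have hσ' : (P * σ * P).PosSemidef := by
    have h := hσ.mul_mul_conjTranspose_same P
    rwa [hP] at h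
  rw [msqrt_of_posSemidef hρ', msqrt_of_posSemidef hσ', msqrt_of_posSemidef hρ,
    msqrt_of_posSemidef hσ]
  set A := hρ'.sqrt with hAdef
  set B := hσ'.sqrt with hBdef
  set R := hρ.sqrt with hRdef
  set S := hσ.sqrt with hSdef
  have hρP : (P * ρ * P) * P = P * ρ * P := by rw [mul_assoc (P * ρ) P P, hP2]
  have hσP : (P * σ * P) * P = P * σ * P := by rw [mul_assoc (P * σ) P P, hP2]
  obtain ⟨hAP, hPA⟩ := sqrt_mul_proj hρ' hP hρP
  obtain ⟨hBP, hPB⟩ := sqrt_mul_proj hσ' hP hσP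
  have hAH : Aᴴ = A := hρ'.posSemidef_sqrt.1
  have hBH : Bᴴ = B := hσ'.posSemidef_sqrt.1
  have hRH : Rᴴ = R := hρ.posSemidef_sqrt.1
  have hSH : Sᴴ = S := hσ.posSemidef_sqrt.1
  have hAA : A * A = P * ρ * P := hρ'.sqrt_mul_self
  have hBB : B * B = P * σ * P := hσ'.sqrt_mul_self
  have hRR : R * R = ρ := hρ.sqrt_mul_self
  have hSS : S * S = σ := hσ.sqrt_mul_self
  have eq1 : (A * S) * (A * S)ᴴ = (A * B) * (A * B)ᴴ := by
    rw [conjTranspose_mul, conjTranspose_mul, hAH, hSH, hBH]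
    calc A * S * (S * A) = A * (S * S) * A := by simp only [mul_assoc]
      _ = A * σ * A := by rw [hSS]
      _ = (A * P) * σ * (P * A) := by rw [hAP, hPA]
      _ = A * (P * σ * P) * A := by simp only [mul_assoc]
      _ = A * (B * B) * A := by rw [hBB]
      _ = A * B * (B * A) := by simp only [mul_assoc]
  have eq2 : (R * B)ᴴ * (R * B) = (A * B)ᴴ * (A * B) := by
    rw [conjTranspose_mul, conjTranspose_mul, hRH, hBH, hAH]
    calc B * R * (R * B) = B * (R * R) * B := by simp only [mul_assoc]
      _ = B * ρ * B := by rw [hRR]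
      _ = (B * P) * ρ * (P * B) := by rw [hBP, hPB]
      _ = B * (P * ρ * P) * B := by simp only [mul_assoc]
      _ = B * (A * A) * B := by rw [hAA]
      _ = B * A * (A * B) := by simp only [mul_assoc]
  have key1 : traceNorm (A * S) = traceNorm (A * B) := by
    rw [← traceNorm_conjTranspose (A * S), ← traceNorm_conjTranspose (A * B)]
    unfold traceNorm
    rw [conjTranspose_conjTranspose, conjTranspose_conjTranspose, eq1]
  have key2 : traceNorm (R * B) = traceNorm (A * B) := by
    unfold traceNorm
    rw [eq2]
  exact ⟨key1.trans key2.symm, key1⟩
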